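/- Let p(t) = sum_{j=1}^n c_j e^{-lambda_j t} with real coefficients c_j and real exponents lambda_1 > ... > lambda_n, and suppose |lambda_1| <= L. Then for any t_1, t_2 > 0: max over t in [-t_2, t_1] of |p(t)| <= e^{(t_1+t_2) L} * (4e (t_1+t_2)/t_1)^{n-1} * max over t in [0, t_1] of |p(t)|. (Nazarov-Turan lemma, specialized to real exponents and intervals.) -/

import Mathlib

namespace NT

/-- complete homogeneous symmetric function of degree `d` in the list of variables -/
def hc : ℕ → List ℝ → ℝ
  | d, [] => if d = 0 then 1 else 0
  | d, x :: l => ∑ i ∈ Finset.range (d + 1), x ^ i * hc (d - i) l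

@[simp] lemma hc_nil (d : ℕ) : hc d [] = if d = 0 then 1 else 0 := rfl

lemma hc_cons (d : ℕ) (x : ℝ) (l : List ℝ) :
    hc d (x :: l) = ∑ i ∈ Finset.range (d + 1), x ^ i * hc (d - i) l := rfl

@[simp] lemma hc_zero (l : List ℝ) : hc 0 l = 1 := by
  induction l with
  | nil => simp [hc]
  | cons x l ih => simp [hc_cons, ih]

lemma hc_singleton (d : ℕ) (x : ℝ) : hc d [x] = x ^ d := by
  rw [hc_cons, Finset.sum_eq_single d]
  · simp
  · intro i hi hne
    have : d - i ≠ 0 := by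
      simp only [Finset.mem_range] at hi
      omega
    simp [this]
  · simp

/-- peel lemma -/
lemma hc_peel (d : ℕ) (x : ℝ) (l : List ℝ) :
    hc (d + 1) (x :: l) = x * hc d (x :: l) + hc (d + 1) l := by
  rw [hc_cons, Finset.sum_range_succ', hc_cons]
  simp only [pow_zero, one_mul, Nat.sub_zero]
  rw [Finset.mul_sum]
  congr 1
  refine Finset.sum_congr rfl fun i hi => ?_
  have : d + 1 - (i + 1) = d - i := by omega
  rw [this]; ring

/-- the key two–variable identity -/
lemma hc_diamond (d : ℕ) (a b : ℝ) (l : List ℝ) :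
    (a - b) * hc d (a :: b :: l) = a * hc d (a :: l) - b * hc d (b :: l) := by
  induction d with
  | zero => simp
  | succ d ih =>
    rw [hc_peel d a (b :: l)]
    have peelb : hc (d + 1) (b :: l) = b * hc d (b :: l) + hc (d + 1) l := hc_peel d b l
    have peela : hc (d + 1) (a :: l) = a * hc d (a :: l) + hc (d + 1) l := hc_peel d a l
    calc (a - b) * (a * hc d (a :: b :: l) + hc (d + 1) (b :: l))
        = a * ((a - b) * hc d (a :: b :: l)) + (a - b) * hc (d + 1) (b :: l) := by ring
      _ = a * (a * hc d (a :: l) - b * hc d (b :: l)) + (a - b) * hc (d + 1) (b :: l) := by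
          rw [ih]
      _ = a * hc (d + 1) (a :: l) - b * hc (d + 1) (b :: l) := by
          rw [peela, peelb]; ring

lemma hc_swap (d : ℕ) (a b : ℝ) (l : List ℝ) :
    hc d (a :: b :: l) = hc d (b :: a :: l) := by
  induction d with
  | zero => simp
  | succ d ih =>
    rw [hc_peel d a (b :: l), hc_peel d b (a :: l)]
    have h1 : hc (d + 1) (b :: l) = b * hc d (b :: l) + hc (d + 1) l := hc_peel d b l
    have h2 : hc (d + 1) (a :: l) = a * hc d (a :: l) + hc (d + 1) l := hc_peel d a l
    have key := hc_diamond d a b l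
    rw [ih] at key
    rw [h1, h2, ih]
    linarith [key]

lemma hc_concat_singleton (d : ℕ) (b : ℝ) (l : List ℝ) :
    hc d (l ++ [b]) = hc d (b :: l) := by
  induction l generalizing d with
  | nil => rfl
  | cons x l ih =>
    have : (x :: l) ++ [b] = x :: (l ++ [b]) := rfl
    rw [this, hc_cons]
    rw [hc_swap d b x l, hc_cons]
    refine Finset.sum_congr rfl fun i _ => ?_
    rw [ih]

lemma hc_nonneg (d : ℕ) (l : List ℝ) (h : ∀ y ∈ l, 0 ≤ y) : 0 ≤ hc d l := by
  induction l generalizing d with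
  | nil => by_cases hd : d = 0 <;> simp [hd]
  | cons x l ih =>
    rw [hc_cons]
    refine Finset.sum_nonneg fun i _ => mul_nonneg (pow_nonneg (h x (by simp)) i) ?_
    exact ih _ fun y hy => h y (by simp [hy])

/-- hockey stick in the needed form -/
lemma hockey (d c : ℕ) :
    ∑ j ∈ Finset.range (d + 1), (j + c).choose j = (d + c + 1).choose d := by
  induction d with
  | zero => simp
  | succ d ih =>
    rw [Finset.sum_range_succ, ih]
    have : d + 1 + c + 1 = (d + c + 1) + 1 := by omega
    rw [this]
    rw [Nat.choose_succ_succ' (d + c + 1) d]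
    have h2 : d + c + 1 - d = c + 1 := by omega
    have h3 : (d + 1 + c).choose (d + 1) = (d + c + 1).choose (d + 1) := by
      congr 1; omega
    omega

lemma hc_le_choose (d : ℕ) (l : List ℝ) (h0 : ∀ y ∈ l, 0 ≤ y) (h1 : ∀ y ∈ l, y ≤ 1) :
    hc d l ≤ (d + l.length - 1).choose d := by
  induction l generalizing d with
  | nil =>
    by_cases hd : d = 0
    · simp [hd]
    · simp only [hc_nil, if_neg hd, List.length_nil, Nat.add_zero]
      positivity
  | cons x l ih =>
    rw [hc_cons]
    have step : ∀ i ∈ Finset.range (d + 1),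
        x ^ i * hc (d - i) l ≤ ((d - i) + l.length - 1).choose (d - i) := by
      intro i hi
      have hx0 : 0 ≤ x := h0 x (by simp)
      have hx1 : x ≤ 1 := h1 x (by simp)
      have hnn : 0 ≤ hc (d - i) l := hc_nonneg _ _ fun y hy => h0 y (by simp [hy])
      calc x ^ i * hc (d - i) l ≤ 1 * hc (d - i) l := by
            apply mul_le_mul_of_nonneg_right _ hnn
            exact pow_le_one₀ hx0 hx1
        _ = hc (d - i) l := one_mul _
        _ ≤ _ := ih _ (fun y hy => h0 y (by simp [hy])) (fun y hy => h1 y (by simp [hy]))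
    calc hc d (x :: l) ≤ ∑ i ∈ Finset.range (d + 1),
            (((d - i) + l.length - 1).choose (d - i) : ℝ) := by
          rw [hc_cons]; exact Finset.sum_le_sum step
      _ ≤ ((d + (x :: l).length - 1).choose d : ℝ) := by
          rw [← Nat.cast_sum]
          rw [Nat.cast_le]
          have reflect : ∑ i ∈ Finset.range (d + 1), ((d - i) + l.length - 1).choose (d - i)
              = ∑ j ∈ Finset.range (d + 1), (j + l.length - 1).choose j := by
            have := Finset.sum_range_reflect (fun j => (j + l.length - 1).choose j) (d + 1)
            rw [← this]
            refine Finset.sum_congr rfl fun i hi => ?_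
            simp only [Finset.mem_range] at hi
            congr 2 <;> omega
          rw [reflect]
          rcases Nat.eq_zero_or_pos l.length with hl | hl
          · have : ∀ j ∈ Finset.range (d + 1), (j + l.length - 1).choose j
                = if j = 0 then 1 else 0 := by
              intro j hj
              rcases Nat.eq_zero_or_pos j with rfl | hjp
              · simp
              · rw [if_neg (by omega), Nat.choose_eq_zero_of_lt (by omega)]
            rw [Finset.sum_congr rfl this, Finset.sum_ite_eq' (Finset.range (d+1)) 0 (fun _ => 1)]
            simp only [Finset.mem_range, if_pos (by omega : 0 < d + 1)]
            have e3 : d + (x :: l).length - 1 = d := by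
              simp only [List.length_cons, hl]; omega
            rw [e3, Nat.choose_self]
          · obtain ⟨c, hc'⟩ : ∃ c, l.length = c + 1 := ⟨l.length - 1, by omega⟩
            rw [hc']
            have e1 : ∑ j ∈ Finset.range (d+1), (j + (c+1) - 1).choose j
                = ∑ j ∈ Finset.range (d+1), (j + c).choose j := by
              refine Finset.sum_congr rfl fun j _ => ?_
              have : j + (c + 1) - 1 = j + c := by omega
              rw [this]
            rw [e1, hockey d c]
            have e2 : d + (x :: l).length - 1 = d + c + 1 := by
              simp only [List.length_cons, hc']; omega
            rw [e2]


lemma pow_self_le_factorial_mul_exp (r : ℕ) :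
    (r : ℝ) ^ r ≤ (r.factorial : ℝ) * Real.exp 1 ^ r := by
  induction r with
  | zero => simp
  | succ r ih =>
    have hfe : (0:ℝ) ≤ (r.factorial : ℝ) * Real.exp 1 ^ r := by positivity
    have h1 : ((r:ℝ) + 1) ^ r ≤ (r:ℝ) ^ r * Real.exp 1 := by
      rcases Nat.eq_zero_or_pos r with rfl | hr
      · simpa using Real.one_le_exp (by norm_num)
      · have hrpos : (0:ℝ) < r := by positivity
        have hs : (1 + 1 / (r:ℝ)) ≤ Real.exp (1 / r) := by
          have := Real.add_one_le_exp (1 / (r:ℝ)); linarith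
        have hpow : (1 + 1/(r:ℝ)) ^ r ≤ Real.exp (1/(r:ℝ)) ^ r :=
          pow_le_pow_left₀ (by positivity) hs r
        have hexp : Real.exp (1/(r:ℝ)) ^ r = Real.exp 1 := by
          rw [← Real.exp_nat_mul]
          congr 1
          field_simp
        have hid : ((r:ℝ) + 1) ^ r = (r:ℝ) ^ r * (1 + 1/(r:ℝ)) ^ r := by
          rw [← mul_pow]
          congr 1
          field_simp
        rw [hid]
        calc (r:ℝ) ^ r * (1 + 1/(r:ℝ)) ^ r ≤ (r:ℝ) ^ r * Real.exp 1 := by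
              refine mul_le_mul_of_nonneg_left ?_ (by positivity)
              rw [← hexp]; exact hpow
          _ = _ := rfl
    have h2 : ((r:ℝ) + 1) ^ (r+1) = ((r:ℝ)+1) * ((r:ℝ)+1) ^ r := by ring
    have h3 : ((r:ℝ)+1) * ((r:ℝ)+1)^r ≤ ((r:ℝ)+1) * ((r:ℝ)^r * Real.exp 1) :=
      mul_le_mul_of_nonneg_left h1 (by positivity)
    have h4 : (r:ℝ)^r * Real.exp 1 ≤ ((r.factorial : ℝ) * Real.exp 1 ^ r) * Real.exp 1 :=
      mul_le_mul_of_nonneg_right ih (Real.exp_pos 1).le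
    have hcast : (((r+1) : ℕ) : ℝ) = (r:ℝ) + 1 := by push_cast; ring
    rw [hcast]
    calc ((r:ℝ)+1) ^ (r+1) = ((r:ℝ)+1) * ((r:ℝ)+1)^r := h2
      _ ≤ ((r:ℝ)+1) * ((r:ℝ)^r * Real.exp 1) := h3
      _ ≤ ((r:ℝ)+1) * (((r.factorial : ℝ) * Real.exp 1 ^ r) * Real.exp 1) :=
          mul_le_mul_of_nonneg_left h4 (by positivity)
      _ = (((r+1).factorial : ℝ)) * Real.exp 1 ^ (r+1) := by
          rw [Nat.factorial_succ]; push_cast; ring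

lemma choose_le_real (N r : ℕ) (hr : 0 < r) :
    (N.choose r : ℝ) ≤ (Real.exp 1 * N / r) ^ r := by
  have h1 : (N.choose r : ℝ) ≤ (N:ℝ)^r / r.factorial := Nat.choose_le_pow_div r N
  have key : (r:ℝ)^r ≤ (r.factorial : ℝ) * Real.exp 1 ^ r := pow_self_le_factorial_mul_exp r
  have hrpos : (0:ℝ) < r := by positivity
  have hfac : (0:ℝ) < r.factorial := by positivity
  have h2 : (Real.exp 1 * N / r) ^ r = Real.exp 1 ^ r * (N:ℝ)^r / (r:ℝ)^r := by
    rw [div_pow, mul_pow]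
  rw [h2]
  refine h1.trans ?_
  rw [div_le_div_iff₀ hfac (by positivity)]
  calc (N:ℝ)^r * (r:ℝ)^r ≤ (N:ℝ)^r * ((r.factorial : ℝ) * Real.exp 1 ^ r) :=
        mul_le_mul_of_nonneg_left key (by positivity)
    _ = Real.exp 1 ^ r * (N:ℝ)^r * (r.factorial:ℝ) := by ring

open Polynomial Finset

/-- windowed Lagrange interpolation polynomial on nodes `v i, …, v (i+k)` -/
noncomputable def LL (v φ : ℕ → ℝ) (i k : ℕ) : Polynomial ℝ :=
  Lagrange.interpolate (Finset.Ico i (i + k + 1)) v φ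

lemma injOn_window {n : ℕ} {v : ℕ → ℝ} (hv : ∀ s t, s < t → t < n → v s < v t)
    {i k : ℕ} (hik : i + k < n) : Set.InjOn v (Finset.Ico i (i + k + 1)) := by
  intro s hs t ht hst
  simp only [Finset.coe_Ico, Set.mem_Ico] at hs ht
  by_contra hne
  rcases lt_or_gt_of_ne hne with h | h
  · exact absurd hst (ne_of_lt (hv s t h (by omega)))
  · exact absurd hst.symm (ne_of_lt (hv t s h (by omega)))

lemma card_window (i k : ℕ) : (Finset.Ico i (i + k + 1)).card = k + 1 := by
  rw [Nat.card_Ico]; omega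

lemma LL_degree_lt {n : ℕ} (v φ : ℕ → ℝ) (hv : ∀ s t, s < t → t < n → v s < v t)
    {i k : ℕ} (hik : i + k < n) : (LL v φ i k).degree < ((k + 1 : ℕ) : WithBot ℕ) := by
  have := Lagrange.degree_interpolate_lt φ (injOn_window hv hik)
  rwa [card_window] at this

lemma LL_eval_at_node {n : ℕ} (v φ : ℕ → ℝ) (hv : ∀ s t, s < t → t < n → v s < v t)
    {i k j : ℕ} (hik : i + k < n) (hj1 : i ≤ j) (hj2 : j ≤ i + k) :
    (LL v φ i k).eval (v j) = φ j :=
  Lagrange.eval_interpolate_at_node φ (injOn_window hv hik)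
    (by simp only [Finset.mem_Ico]; omega)

/-- Neville's recursion -/
lemma neville {n : ℕ} (v φ : ℕ → ℝ) (hv : ∀ s t, s < t → t < n → v s < v t)
    {i k : ℕ} (hik : i + k + 1 < n) :
    LL v φ i (k + 1) =
      Polynomial.C ((v (i + k + 1) - v i)⁻¹) *
        ((X - Polynomial.C (v i)) * LL v φ (i + 1) k
          - (X - Polynomial.C (v (i + k + 1))) * LL v φ i k) := by
  have hvne : v i < v (i + k + 1) := hv _ _ (by omega) hik
  have hne : v (i + k + 1) - v i ≠ 0 := sub_ne_zero.mpr (ne_of_gt hvne)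
  symm
  apply Lagrange.eq_interpolate_of_eval_eq _ (injOn_window hv (by omega : i + (k+1) < n))
  · -- degree
    rw [card_window]
    have h1 : ((X - Polynomial.C (v i)) * LL v φ (i + 1) k).degree
        < ((k + 2 : ℕ) : WithBot ℕ) := by
      rw [degree_mul, degree_X_sub_C]
      have := LL_degree_lt v φ hv (by omega : (i+1) + k < n)
      calc (1 : WithBot ℕ) + (LL v φ (i+1) k).degree
          < 1 + ((k+1 : ℕ) : WithBot ℕ) := WithBot.add_lt_add_left (by simp) this
        _ = ((k + 2 : ℕ) : WithBot ℕ) := by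
            push_cast; ring
    have h2 : ((X - Polynomial.C (v (i + k + 1))) * LL v φ i k).degree
        < ((k + 2 : ℕ) : WithBot ℕ) := by
      rw [degree_mul, degree_X_sub_C]
      have := LL_degree_lt v φ hv (by omega : i + k < n)
      calc (1 : WithBot ℕ) + (LL v φ i k).degree
          < 1 + ((k+1 : ℕ) : WithBot ℕ) := WithBot.add_lt_add_left (by simp) this
        _ = ((k + 2 : ℕ) : WithBot ℕ) := by
            push_cast; ring
    have hsub : (((X - Polynomial.C (v i)) * LL v φ (i + 1) k
          - (X - Polynomial.C (v (i + k + 1))) * LL v φ i k)).degree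
        < ((k + 2 : ℕ) : WithBot ℕ) :=
      lt_of_le_of_lt (degree_sub_le _ _) (max_lt_iff.mpr ⟨h1, h2⟩)
    have hCle : (Polynomial.C ((v (i + k + 1) - v i)⁻¹) *
        ((X - Polynomial.C (v i)) * LL v φ (i + 1) k
          - (X - Polynomial.C (v (i + k + 1))) * LL v φ i k)).degree
        ≤ (((X - Polynomial.C (v i)) * LL v φ (i + 1) k
          - (X - Polynomial.C (v (i + k + 1))) * LL v φ i k)).degree := by
      calc _ ≤ (Polynomial.C ((v (i + k + 1) - v i)⁻¹)).degree + _ := degree_mul_le _ _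
        _ ≤ 0 + _ := add_le_add degree_C_le le_rfl
        _ = _ := zero_add _
    have : (k + 1 + 1 : ℕ) = (k + 2 : ℕ) := by omega
    rw [this]
    exact lt_of_le_of_lt hCle hsub
  · -- evaluation
    intro j hj
    simp only [Finset.mem_Ico] at hj
    simp only [eval_mul, eval_C, eval_sub, eval_X]
    rcases Nat.lt_or_ge j (i + 1) with hji | hji
    · -- j = i
      have hj_eq : j = i := by omega
      subst hj_eq
      rw [LL_eval_at_node v φ hv (by omega : j + k < n) le_rfl (by omega)]
      field_simp
      ring
    · rcases Nat.lt_or_ge j (i + k + 1) with hjm | hjt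
      · -- middle
        rw [LL_eval_at_node v φ hv (by omega : (i+1) + k < n) (by omega) (by omega),
            LL_eval_at_node v φ hv (by omega : i + k < n) (by omega) (by omega)]
        field_simp
        ring
      · -- j = i + k + 1
        have hj_eq : j = i + k + 1 := by omega
        subst hj_eq
        rw [LL_eval_at_node v φ hv (by omega : (i+1) + k < n) (by omega) (by omega)]
        field_simp
        ring

noncomputable def dd (v φ : ℕ → ℝ) (i k : ℕ) : ℝ := (LL v φ i k).coeff k

lemma LL_zero (v φ : ℕ → ℝ) (i : ℕ) : LL v φ i 0 = Polynomial.C (φ i) := by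
  unfold LL
  have h : Finset.Ico i (i + 0 + 1) = {i} := by
    ext t; simp only [Finset.mem_Ico, Finset.mem_singleton]; omega
  rw [h, Lagrange.interpolate_singleton]

lemma dd_zero (v φ : ℕ → ℝ) (i : ℕ) : dd v φ i 0 = φ i := by
  rw [dd, LL_zero, coeff_C_zero]

lemma coeff_linear_mul {P : Polynomial ℝ} {a : ℝ} {k : ℕ}
    (h : P.degree < ((k + 1 : ℕ) : WithBot ℕ)) :
    ((X - Polynomial.C a) * P).coeff (k + 1) = P.coeff k := by
  rw [sub_mul, coeff_sub, coeff_X_mul, coeff_C_mul,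
    coeff_eq_zero_of_degree_lt h, mul_zero, sub_zero]

lemma dd_rec {n : ℕ} (v φ : ℕ → ℝ) (hv : ∀ s t, s < t → t < n → v s < v t)
    {i k : ℕ} (hik : i + k + 1 < n) :
    dd v φ i (k + 1)
      = (v (i + k + 1) - v i)⁻¹ * (dd v φ (i + 1) k - dd v φ i k) := by
  rw [dd, neville v φ hv hik, coeff_C_mul, coeff_sub,
    coeff_linear_mul (LL_degree_lt v φ hv (by omega : (i+1) + k < n)),
    coeff_linear_mul (LL_degree_lt v φ hv (by omega : i + k < n))]
  rfl

def xwin (x : ℕ → ℝ) (i k : ℕ) : List ℝ := (List.range (k + 1)).map (fun s => x (i + s))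

def xmid (x : ℕ → ℝ) (i k : ℕ) : List ℝ := (List.range k).map (fun s => x (i + 1 + s))

lemma xwin_eq_cons (x : ℕ → ℝ) (i k : ℕ) : xwin x i k = x i :: xmid x i k := by
  unfold xwin xmid
  rw [List.range_succ_eq_map, List.map_cons, List.map_map]
  refine congrArg₂ List.cons rfl ?_
  apply List.map_congr_left
  intro s _
  simp only [Function.comp_apply, Nat.succ_eq_add_one]
  congr 1
  omega

lemma xwin_eq_concat (x : ℕ → ℝ) (i k : ℕ) :
    xwin x (i + 1) k = xmid x i k ++ [x (i + k + 1)] := by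
  unfold xwin xmid
  rw [List.range_succ, List.map_append]
  congr 1
  simp only [List.map_cons, List.map_nil]
  congr 2
  omega

lemma xwin_succ (x : ℕ → ℝ) (i k : ℕ) :
    xwin x i (k + 1) = x i :: xwin x (i + 1) k := by
  rw [xwin_eq_cons x i (k+1), xwin_eq_concat x i k]
  congr 1
  unfold xmid
  rw [List.range_succ, List.map_append]
  congr 1
  simp only [List.map_cons, List.map_nil]
  congr 2
  omega

lemma hc_cons_concat (d : ℕ) (a b : ℝ) (l : List ℝ) :
    hc d (a :: (l ++ [b])) = hc d (a :: b :: l) := by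
  rw [hc_cons, hc_cons]
  refine Finset.sum_congr rfl fun i _ => ?_
  rw [hc_concat_singleton]

lemma G_diamond (d : ℕ) (a b : ℝ) (l : List ℝ) :
    (a - b) * (hc d (a :: b :: l) * (a :: b :: l).prod)
      = a * b * (hc d (a :: l) * (a :: l).prod - hc d (b :: l) * (b :: l).prod) := by
  have h := hc_diamond d a b l
  simp only [List.prod_cons]
  linear_combination (a * b * l.prod) * h

lemma dd_formula {n m : ℕ} (hm : 1 ≤ m) (x : ℕ → ℝ)
    (hx : ∀ j, j < n → 0 < x j) (hxa : ∀ s t, s < t → t < n → x t < x s) :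
    ∀ k i, i + k < n →
      dd (fun j => (x j)⁻¹) (fun j => x j ^ m) i k
        = (-1) ^ k * (hc (m - 1) (xwin x i k) * (xwin x i k).prod) := by
  have hv : ∀ s t, s < t → t < n → (x s)⁻¹ < (x t)⁻¹ := by
    intro s t hst htn
    exact inv_strictAnti₀ (hx t htn) (hxa s t hst htn)
  intro k
  induction k with
  | zero =>
    intro i hi
    rw [dd_zero]
    have : xwin x i 0 = [x i] := by
      unfold xwin
      simp [List.range_succ]
    rw [this, hc_singleton]
    simp only [List.prod_cons, List.prod_nil, pow_zero, one_mul, mul_one]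
    rw [← pow_succ]
    congr 1
    omega
  | succ k ih =>
    intro i hi
    rw [dd_rec _ _ hv hi, ih (i+1) (by omega), ih i (by omega)]
    set a := x i with ha_def
    set b := x (i + k + 1) with hb_def
    have hapos : 0 < a := hx i (by omega)
    have hbpos : 0 < b := hx (i + k + 1) (by omega)
    have hba : b < a := hxa i (i + k + 1) (by omega) (by omega)
    have habne : a - b ≠ 0 := sub_ne_zero.mpr (ne_of_gt hba)
    -- rewrite the three windows
    rw [xwin_eq_concat x i k, xwin_eq_cons x i k, xwin_succ x i k, xwin_eq_concat x i k]
    set l := xmid x i k with hl_def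
    -- G-values
    have hGb : hc (m-1) (l ++ [b]) * (l ++ [b]).prod = hc (m-1) (b :: l) * (b :: l).prod := by
      rw [hc_concat_singleton]
      congr 1
      rw [List.prod_append, List.prod_cons]
      simp [mul_comm]
    have hGt : hc (m-1) (a :: (l ++ [b])) * (a :: (l ++ [b])).prod
        = hc (m-1) (a :: b :: l) * (a :: b :: l).prod := by
      rw [hc_cons_concat]
      congr 1
      simp only [List.prod_cons, List.prod_append, List.prod_cons, List.prod_nil]
      ring
    rw [hGb, hGt]
    have key := G_diamond (m-1) a b l
    set GA := hc (m-1) (a :: l) * (a :: l).prod with hGA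
    set GB := hc (m-1) (b :: l) * (b :: l).prod with hGB
    set GT := hc (m-1) (a :: b :: l) * (a :: b :: l).prod with hGT
    have hinv : (b⁻¹ - a⁻¹)⁻¹ = (a - b)⁻¹ * (a * b) := by
      rw [inv_sub_inv (ne_of_gt hbpos) (ne_of_gt hapos), div_eq_mul_inv, mul_inv, inv_inv,
        mul_comm b a]
    rw [hinv]
    have hT : GT = (a - b)⁻¹ * (a * b * (GA - GB)) := by
      rw [← key, inv_mul_cancel_left₀ habne]
    rw [hT]
    ring

noncomputable def om (v : ℕ → ℝ) (k : ℕ) : Polynomial ℝ :=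
  ∏ s ∈ Finset.range k, (X - Polynomial.C (v s))

lemma om_zero (v : ℕ → ℝ) : om v 0 = 1 := by simp [om]

lemma om_succ (v : ℕ → ℝ) (k : ℕ) :
    om v (k + 1) = om v k * (X - Polynomial.C (v k)) := by
  rw [om, om, Finset.prod_range_succ]

lemma om_monic (v : ℕ → ℝ) (k : ℕ) : (om v k).Monic :=
  monic_prod_of_monic _ _ fun s _ => monic_X_sub_C (v s)

lemma om_natDegree (v : ℕ → ℝ) (k : ℕ) : (om v k).natDegree = k := by
  rw [om, natDegree_prod_of_monic _ _ fun s _ => monic_X_sub_C (v s)]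
  simp [natDegree_X_sub_C]

lemma om_coeff_self (v : ℕ → ℝ) (k : ℕ) : (om v k).coeff k = 1 := by
  have := (om_monic v k).coeff_natDegree
  rwa [om_natDegree] at this

lemma om_coeff_eq_zero (v : ℕ → ℝ) {k j : ℕ} (h : k < j) : (om v k).coeff j = 0 :=
  coeff_eq_zero_of_natDegree_lt (by rwa [om_natDegree])

lemma om_eval_node (v : ℕ → ℝ) {k j : ℕ} (h : j < k) : (om v k).eval (v j) = 0 := by
  rw [om, eval_prod]
  exact Finset.prod_eq_zero (Finset.mem_range.mpr h) (by simp)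

lemma om_degree_lt (v : ℕ → ℝ) (k : ℕ) : (om v k).degree < ((k + 1 : ℕ) : WithBot ℕ) := by
  rw [Polynomial.degree_eq_natDegree (om_monic v k).ne_zero, om_natDegree]
  exact_mod_cast Nat.lt_succ_self k

/-- Newton form of the interpolation polynomial -/
lemma newton {n : ℕ} (v φ : ℕ → ℝ) (hv : ∀ s t, s < t → t < n → v s < v t) :
    ∀ k, k < n →
      LL v φ 0 k = ∑ r ∈ Finset.range (k + 1), Polynomial.C (dd v φ 0 r) * om v r := by
  intro k
  induction k with
  | zero =>
    intro _
    rw [LL_zero, Finset.sum_range_one, dd_zero, om_zero, mul_one]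
  | succ k ih =>
    intro hk
    have hLk := ih (by omega)
    set q := dd v φ 0 (k + 1) with hq
    have hQ : LL v φ 0 (k + 1) - LL v φ 0 k - Polynomial.C q * om v (k + 1) = 0 := by
      have hdeglt : (LL v φ 0 (k + 1) - LL v φ 0 k - Polynomial.C q * om v (k + 1)).degree
          < ((k + 1 : ℕ) : WithBot ℕ) := by
        refine lt_of_le_of_lt (Polynomial.degree_le_iff_coeff_zero _ (k : WithBot ℕ) |>.mpr ?_)
          (by exact_mod_cast WithBot.coe_lt_coe.mpr (Nat.lt_succ_self k))
        intro j hj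
        have hjk : k < j := by exact_mod_cast WithBot.coe_lt_coe.mp hj
        rw [coeff_sub, coeff_sub, coeff_C_mul]
        by_cases hjeq : j = k + 1
        · -- j = k+1
          subst hjeq
          rw [om_coeff_self]
          have h2 : (LL v φ 0 k).coeff (k + 1) = 0 :=
            coeff_eq_zero_of_degree_lt (LL_degree_lt v φ hv (by omega : 0 + k < n))
          rw [h2]
          simp [hq, dd]
        · -- j > k+1
          have hj2 : k + 1 < j := by omega
          have h1 : (LL v φ 0 (k + 1)).coeff j = 0 := by
            refine coeff_eq_zero_of_degree_lt ?_
            refine lt_of_lt_of_le (LL_degree_lt v φ hv (by omega : 0 + (k + 1) < n)) ?_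
            exact_mod_cast WithBot.coe_le_coe.mpr (by omega : k + 1 + 1 ≤ j)
          have h2' : (LL v φ 0 k).coeff j = 0 := by
            refine coeff_eq_zero_of_degree_lt ?_
            refine lt_trans (LL_degree_lt v φ hv (by omega : 0 + k < n)) ?_
            exact_mod_cast WithBot.coe_lt_coe.mpr (by omega : k + 1 < j)
          rw [h1, h2', om_coeff_eq_zero v hj2]
          ring
      have heval : ∀ j ∈ Finset.Ico 0 (0 + k + 1),
          (LL v φ 0 (k + 1) - LL v φ 0 k - Polynomial.C q * om v (k + 1)).eval (v j)
            = (fun _ => (0:ℝ)) j := by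
        intro j hj
        simp only [Finset.mem_Ico] at hj
        have hjk : j ≤ k := by omega
        rw [eval_sub, eval_sub, eval_mul, eval_C,
          LL_eval_at_node v φ hv (by omega : 0 + (k+1) < n) (by omega) (by omega),
          LL_eval_at_node v φ hv (by omega : 0 + k < n) (by omega) (by omega),
          om_eval_node v (by omega : j < k + 1)]
        simp
      have := Lagrange.eq_interpolate_of_eval_eq (fun _ => (0:ℝ))
        (injOn_window hv (by omega : 0 + k < n))
        (by rw [card_window]; exact hdeglt) heval
      rw [this]
      have : (fun _ : ℕ => (0:ℝ)) = (0 : ℕ → ℝ) := rfl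
      rw [this, map_zero]
    have hstep : LL v φ 0 (k + 1) = LL v φ 0 k + Polynomial.C q * om v (k + 1) := by
      linear_combination hQ
    rw [hstep, hLk, Finset.sum_range_succ (fun r => Polynomial.C (dd v φ 0 r) * om v r) (k + 1)]


lemma list_prod_range (f : ℕ → ℝ) (k : ℕ) :
    ((List.range k).map f).prod = ∏ s ∈ Finset.range k, f s := by
  induction k with
  | zero => simp
  | succ k ih =>
    rw [List.range_succ, List.map_append, List.prod_append, Finset.prod_range_succ, ih]
    simp

lemma om_coeff_l1 (v : ℕ → ℝ) :
    ∀ k, (∀ s, s < k → 0 < v s) →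
      ∑ l ∈ Finset.range (k + 1), |(om v k).coeff l| ≤ ∏ s ∈ Finset.range k, (1 + v s) := by
  intro k
  induction k with
  | zero =>
    intro _
    rw [om_zero]
    simp
  | succ k ih =>
    intro hv
    have hvk : 0 < v k := hv k (Nat.lt_succ_self k)
    have IH := ih (fun s hs => hv s (by omega))
    have hcoeff0 : (om v (k + 1)).coeff 0 = -(v k) * (om v k).coeff 0 := by
      rw [om_succ, Polynomial.mul_coeff_zero]
      simp only [coeff_sub, coeff_X_zero, coeff_C_zero]
      ring
    have hcoeffS : ∀ l, (om v (k + 1)).coeff (l + 1)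
        = (om v k).coeff l - v k * (om v k).coeff (l + 1) := by
      intro l
      rw [om_succ, mul_sub, coeff_sub, Polynomial.coeff_mul_X, Polynomial.coeff_mul_C]
      ring
    have htop : (om v k).coeff (k + 1) = 0 := om_coeff_eq_zero v (Nat.lt_succ_self k)
    set S := ∑ l ∈ Finset.range (k + 1), |(om v k).coeff l| with hS
    have hsplit : ∑ l ∈ Finset.range (k + 2), |(om v (k + 1)).coeff l|
        = (∑ l ∈ Finset.range (k + 1), |(om v (k + 1)).coeff (l + 1)|)
          + |(om v (k + 1)).coeff 0| := Finset.sum_range_succ' _ (k + 1)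
    have hbound : ∀ l ∈ Finset.range (k + 1), |(om v (k + 1)).coeff (l + 1)|
        ≤ |(om v k).coeff l| + v k * |(om v k).coeff (l + 1)| := by
      intro l _
      rw [hcoeffS l]
      calc |(om v k).coeff l - v k * (om v k).coeff (l + 1)|
          ≤ |(om v k).coeff l| + |v k * (om v k).coeff (l + 1)| := abs_sub _ _
        _ = |(om v k).coeff l| + v k * |(om v k).coeff (l + 1)| := by
            rw [abs_mul, abs_of_pos hvk]
    have hshift : ∑ l ∈ Finset.range (k + 1), |(om v k).coeff (l + 1)|
        = S - |(om v k).coeff 0| := by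
      have := Finset.sum_range_succ' (fun l => |(om v k).coeff l|) (k + 1)
      -- ∑_{l ∈ range (k+2)} = ∑_{l∈range(k+1)} |coeff (l+1)| + |coeff 0|
      have h2 : ∑ l ∈ Finset.range (k + 2), |(om v k).coeff l|
          = S + |(om v k).coeff (k + 1)| := Finset.sum_range_succ _ (k + 1)
      rw [htop] at h2
      simp only [abs_zero, add_zero] at h2
      rw [h2] at this
      linarith [this]
    calc ∑ l ∈ Finset.range (k + 2), |(om v (k + 1)).coeff l|
        = (∑ l ∈ Finset.range (k + 1), |(om v (k + 1)).coeff (l + 1)|)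
          + |(om v (k + 1)).coeff 0| := hsplit
      _ ≤ (∑ l ∈ Finset.range (k + 1),
            (|(om v k).coeff l| + v k * |(om v k).coeff (l + 1)|))
          + v k * |(om v k).coeff 0| := by
          refine add_le_add (Finset.sum_le_sum hbound) ?_
          rw [hcoeff0, abs_mul, abs_neg, abs_of_pos hvk]
      _ = S + v k * ((∑ l ∈ Finset.range (k + 1), |(om v k).coeff (l + 1)|)
            + |(om v k).coeff 0|) := by
          rw [Finset.sum_add_distrib, ← Finset.mul_sum]
          ring
      _ = S + v k * S := by rw [hshift]; ring
      _ = (1 + v k) * S := by ring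
      _ ≤ (1 + v k) * ∏ s ∈ Finset.range k, (1 + v s) := by
          refine mul_le_mul_of_nonneg_left IH (by positivity)
      _ = ∏ s ∈ Finset.range (k + 1), (1 + v s) := by
          rw [Finset.prod_range_succ]; ring

/-- The core discrete lemma -/
lemma core {n m : ℕ} (hn : 1 ≤ n) (hm : 1 ≤ m) (x b : ℕ → ℝ)
    (hx0 : ∀ j, j < n → 0 < x j) (hx1 : ∀ j, j < n → x j ≤ 1)
    (hxa : ∀ s t, s < t → t < n → x t < x s)
    (M : ℝ)
    (hM : ∀ l, l < n → |∑ j ∈ Finset.range n, b j * ((x j)⁻¹) ^ (m + l)| ≤ M) :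
    |∑ j ∈ Finset.range n, b j| ≤ 2 ^ (n - 1) * ((m + n - 1).choose (n - 1)) * M := by
  classical
  set v : ℕ → ℝ := fun j => (x j)⁻¹ with hv_def
  set φ : ℕ → ℝ := fun j => x j ^ m with hφ_def
  have hv : ∀ s t, s < t → t < n → v s < v t := by
    intro s t hst htn
    exact inv_strictAnti₀ (hx0 t htn) (hxa s t hst htn)
  have hMnn : 0 ≤ M := le_trans (abs_nonneg _) (hM 0 (by omega))
  -- step 1: representation
  have hrep : ∑ j ∈ Finset.range n, b j
      = ∑ r ∈ Finset.range n, dd v φ 0 r *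
          ∑ l ∈ Finset.range (r + 1), (om v r).coeff l *
            (∑ j ∈ Finset.range n, b j * v j ^ (m + l)) := by
    have h1 : ∀ j ∈ Finset.range n, b j = b j * v j ^ m * (LL v φ 0 (n - 1)).eval (v j) := by
      intro j hj
      simp only [Finset.mem_range] at hj
      rw [LL_eval_at_node v φ hv (by omega : 0 + (n - 1) < n) (by omega) (by omega)]
      have : v j ^ m * φ j = 1 := by
        simp only [hv_def, hφ_def]
        rw [← mul_pow, inv_mul_cancel₀ (ne_of_gt (hx0 j hj)), one_pow]
      rw [mul_assoc, this, mul_one]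
    rw [Finset.sum_congr rfl h1]
    have h2 : ∀ j ∈ Finset.range n, b j * v j ^ m * (LL v φ 0 (n - 1)).eval (v j)
        = ∑ r ∈ Finset.range n, dd v φ 0 r *
            ∑ l ∈ Finset.range (r + 1), (om v r).coeff l * (b j * v j ^ (m + l)) := by
      intro j hj
      rw [newton v φ hv (n - 1) (by omega)]
      have hrange : n - 1 + 1 = n := by omega
      rw [hrange, eval_finset_sum, Finset.mul_sum]
      refine Finset.sum_congr rfl fun r hr => ?_
      simp only [Finset.mem_range] at hr
      rw [eval_mul, eval_C]
      have heval : (om v r).eval (v j) = ∑ l ∈ Finset.range (r + 1), (om v r).coeff l * v j ^ l := by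
        exact eval_eq_sum_range' (by rw [om_natDegree]; omega) (v j)
      rw [heval]
      simp only [Finset.mul_sum]
      refine Finset.sum_congr rfl fun l _ => ?_
      rw [pow_add]
      ring
    rw [Finset.sum_congr rfl h2, Finset.sum_comm]
    refine Finset.sum_congr rfl fun r _ => ?_
    have e1 : ∀ j ∈ Finset.range n,
        dd v φ 0 r * ∑ l ∈ Finset.range (r + 1), (om v r).coeff l * (b j * v j ^ (m + l))
          = ∑ l ∈ Finset.range (r + 1),
              dd v φ 0 r * ((om v r).coeff l * (b j * v j ^ (m + l))) :=
      fun j _ => Finset.mul_sum _ _ _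
    rw [Finset.sum_congr rfl e1, Finset.sum_comm]
    simp only [Finset.mul_sum]
  -- step 2: bounds
  have hxw0 : ∀ r, r < n → ∀ y ∈ xwin x 0 r, 0 ≤ y := by
    intro r hr y hy
    simp only [xwin, List.mem_map, List.mem_range] at hy
    obtain ⟨s, hs, rfl⟩ := hy
    exact (hx0 _ (by omega)).le
  have hxw1 : ∀ r, r < n → ∀ y ∈ xwin x 0 r, y ≤ 1 := by
    intro r hr y hy
    simp only [xwin, List.mem_map, List.mem_range] at hy
    obtain ⟨s, hs, rfl⟩ := hy
    exact hx1 _ (by omega)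
  have hterm : ∀ r, r < n →
      |dd v φ 0 r *
          ∑ l ∈ Finset.range (r + 1), (om v r).coeff l *
            (∑ j ∈ Finset.range n, b j * v j ^ (m + l))|
        ≤ 2 ^ r * ((m - 1 + r).choose r) * M := by
    intro r hr
    have hdd := dd_formula (n := n) hm x hx0 hxa r 0 (by omega)
    have habs_dd : |dd v φ 0 r| = hc (m - 1) (xwin x 0 r) * (xwin x 0 r).prod := by
      rw [hv_def, hφ_def] at *
      rw [hdd, abs_mul, abs_pow, abs_neg, abs_one, one_pow, one_mul]
      rw [abs_of_nonneg]
      refine mul_nonneg (hc_nonneg _ _ (hxw0 r hr)) ?_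
      exact List.prod_nonneg (hxw0 r hr)
    have hsum_bound : |∑ l ∈ Finset.range (r + 1), (om v r).coeff l *
            (∑ j ∈ Finset.range n, b j * v j ^ (m + l))|
        ≤ (∑ l ∈ Finset.range (r + 1), |(om v r).coeff l|) * M := by
      calc |∑ l ∈ Finset.range (r + 1), (om v r).coeff l *
              (∑ j ∈ Finset.range n, b j * v j ^ (m + l))|
          ≤ ∑ l ∈ Finset.range (r + 1), |(om v r).coeff l *
              (∑ j ∈ Finset.range n, b j * v j ^ (m + l))| := Finset.abs_sum_le_sum_abs _ _
        _ ≤ ∑ l ∈ Finset.range (r + 1), |(om v r).coeff l| * M := by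
            refine Finset.sum_le_sum fun l hl => ?_
            rw [abs_mul]
            refine mul_le_mul_of_nonneg_left ?_ (abs_nonneg _)
            simp only [Finset.mem_range] at hl
            exact hM l (by omega)
        _ = _ := by rw [← Finset.sum_mul]
    have hl1 : ∑ l ∈ Finset.range (r + 1), |(om v r).coeff l|
        ≤ ∏ s ∈ Finset.range r, (1 + v s) :=
      om_coeff_l1 v r (fun s hs => by
        simp only [hv_def]
        exact inv_pos.mpr (hx0 s (by omega)))
    rw [abs_mul]
    have key : |dd v φ 0 r| * (∏ s ∈ Finset.range r, (1 + v s))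
        ≤ 2 ^ r * ((m - 1 + r).choose r) := by
      rw [habs_dd]
      have hprod : (xwin x 0 r).prod = x r * ∏ s ∈ Finset.range r, x s := by
        rw [xwin, list_prod_range, Finset.prod_range_succ]
        simp only [zero_add]
        ring
      rw [hprod]
      have hcomb : (x r * ∏ s ∈ Finset.range r, x s) * ∏ s ∈ Finset.range r, (1 + v s)
          = x r * ∏ s ∈ Finset.range r, (x s + 1) := by
        rw [mul_assoc, ← Finset.prod_mul_distrib]
        congr 1
        refine Finset.prod_congr rfl fun s hs => ?_
        simp only [Finset.mem_range] at hs
        simp only [hv_def]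
        have hxs : x s ≠ 0 := ne_of_gt (hx0 s (by omega))
        field_simp
      have hhc : hc (m - 1) (xwin x 0 r) ≤ ((m - 1 + r).choose (m - 1) : ℝ) := by
        have h5 := hc_le_choose (m - 1) (xwin x 0 r) (hxw0 r hr) (hxw1 r hr)
        have hlen : (xwin x 0 r).length = r + 1 := by simp [xwin]
        rw [hlen] at h5
        have h6 : ((m - 1) + (r + 1) - 1).choose (m - 1) = (m - 1 + r).choose (m - 1) := by
          have e : (m - 1) + (r + 1) - 1 = m - 1 + r := by omega
          rw [e]
        rw [h6] at h5
        exact h5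
      have hsymm : (m - 1 + r).choose (m - 1) = (m - 1 + r).choose r := by
        have := Nat.choose_symm (by omega : r ≤ m - 1 + r)
        have h7 : m - 1 + r - r = m - 1 := by omega
        rw [h7] at this
        exact this
      have hcnn : (0:ℝ) ≤ hc (m - 1) (xwin x 0 r) := hc_nonneg _ _ (hxw0 r hr)
      have h2r : ∏ s ∈ Finset.range r, (x s + 1) ≤ 2 ^ r := by
        calc ∏ s ∈ Finset.range r, (x s + 1) ≤ ∏ s ∈ Finset.range r, 2 := by
              refine Finset.prod_le_prod (fun s hs => ?_) (fun s hs => ?_)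
              · simp only [Finset.mem_range] at hs
                have := hx0 s (by omega); linarith
              · simp only [Finset.mem_range] at hs
                have := hx1 s (by omega); linarith
          _ = 2 ^ r := by rw [Finset.prod_const, Finset.card_range]
      have hxr1 : x r ≤ 1 := hx1 r hr
      have hxr0 : 0 ≤ x r := (hx0 r hr).le
      have hpr1 : (0:ℝ) ≤ ∏ s ∈ Finset.range r, (x s + 1) :=
        Finset.prod_nonneg fun s hs => by
          simp only [Finset.mem_range] at hs
          have := hx0 s (by omega); linarith
      calc hc (m - 1) (xwin x 0 r) * (x r * ∏ s ∈ Finset.range r, x s)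
            * ∏ s ∈ Finset.range r, (1 + v s)
          = hc (m - 1) (xwin x 0 r) * (x r * ∏ s ∈ Finset.range r, (x s + 1)) := by
            rw [mul_assoc, hcomb]
        _ ≤ ((m - 1 + r).choose (m - 1) : ℝ) * (1 * 2 ^ r) := by
            refine mul_le_mul hhc ?_ (by positivity) (by positivity)
            exact mul_le_mul hxr1 h2r hpr1 (by norm_num)
        _ = 2 ^ r * ((m - 1 + r).choose r : ℝ) := by
            rw [hsymm]; ring
    calc |dd v φ 0 r| * |∑ l ∈ Finset.range (r + 1), (om v r).coeff l *
            (∑ j ∈ Finset.range n, b j * v j ^ (m + l))|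
        ≤ |dd v φ 0 r| * ((∑ l ∈ Finset.range (r + 1), |(om v r).coeff l|) * M) :=
          mul_le_mul_of_nonneg_left hsum_bound (abs_nonneg _)
      _ ≤ |dd v φ 0 r| * ((∏ s ∈ Finset.range r, (1 + v s)) * M) := by
          refine mul_le_mul_of_nonneg_left ?_ (abs_nonneg _)
          exact mul_le_mul_of_nonneg_right hl1 hMnn
      _ = (|dd v φ 0 r| * (∏ s ∈ Finset.range r, (1 + v s))) * M := by ring
      _ ≤ (2 ^ r * ((m - 1 + r).choose r)) * M := mul_le_mul_of_nonneg_right key hMnn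
  -- step 3: sum up
  rw [hrep]
  calc |∑ r ∈ Finset.range n, dd v φ 0 r *
          ∑ l ∈ Finset.range (r + 1), (om v r).coeff l *
            (∑ j ∈ Finset.range n, b j * v j ^ (m + l))|
      ≤ ∑ r ∈ Finset.range n, |dd v φ 0 r *
          ∑ l ∈ Finset.range (r + 1), (om v r).coeff l *
            (∑ j ∈ Finset.range n, b j * v j ^ (m + l))| := Finset.abs_sum_le_sum_abs _ _
    _ ≤ ∑ r ∈ Finset.range n, 2 ^ r * ((m - 1 + r).choose r) * M := by
        refine Finset.sum_le_sum fun r hr => ?_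
        exact hterm r (Finset.mem_range.mp hr)
    _ ≤ ∑ r ∈ Finset.range n, 2 ^ (n-1) * ((m - 1 + r).choose r) * M := by
        refine Finset.sum_le_sum fun r hr => ?_
        simp only [Finset.mem_range] at hr
        have h2 : (2:ℝ) ^ r ≤ 2 ^ (n - 1) := by
          apply pow_le_pow_right₀ (by norm_num) (by omega)
        refine mul_le_mul_of_nonneg_right (mul_le_mul_of_nonneg_right h2 (by positivity)) hMnn
    _ = 2 ^ (n-1) * (∑ r ∈ Finset.range n, ((m - 1 + r).choose r : ℝ)) * M := by
        rw [Finset.mul_sum, Finset.sum_mul]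
    _ = 2 ^ (n - 1) * ((m + n - 1).choose (n - 1)) * M := by
        have hsum : ∑ r ∈ Finset.range n, ((m - 1 + r).choose r : ℝ)
            = ((m + n - 1).choose (n-1) : ℝ) := by
          rw [← Nat.cast_sum]
          congr 1
          have hrange : n = (n - 1) + 1 := by omega
          calc ∑ r ∈ Finset.range n, (m - 1 + r).choose r
              = ∑ r ∈ Finset.range ((n-1)+1), (r + (m-1)).choose r := by
                rw [← hrange]
                refine Finset.sum_congr rfl fun r _ => ?_
                have e : m - 1 + r = r + (m - 1) := by omega
                rw [e]
            _ = ((n-1) + (m-1) + 1).choose (n-1) := hockey (n-1) (m-1)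
            _ = (m + n - 1).choose (n-1) := by
                have e : (n-1) + (m-1) + 1 = m + n - 1 := by omega
                rw [e]
        rw [hsum]


lemma keypow {n m : ℕ} (hn : 1 ≤ n) (hm : 1 ≤ m) (t1 t2 : ℝ) (ht1 : 0 < t1) (ht2 : 0 < t2)
    (hmb : (m : ℝ) ≤ t2 * n / t1 + 1) :
    (2:ℝ) ^ (n-1) * ((m + n - 1).choose (n-1) : ℝ)
      ≤ (4 * Real.exp 1 * (t1 + t2) / t1) ^ (n-1) := by
  rcases Nat.eq_or_lt_of_le hn with h1 | h2
  · -- n = 1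
    have : n = 1 := h1.symm
    subst this
    simp
  · -- n ≥ 2
    have hn2 : 2 ≤ n := h2
    have hr : 1 ≤ n - 1 := by omega
    have hE : (0:ℝ) < Real.exp 1 := Real.exp_pos 1
    have hcb := choose_le_real (m + n - 1) (n - 1) (by omega)
    have hcast : ((m + n - 1 : ℕ) : ℝ) = (m : ℝ) + (n : ℝ) - 1 := by
      push_cast [Nat.cast_sub (by omega : 1 ≤ m + n)]
      ring
    have hbase : 2 * (Real.exp 1 * ((m + n - 1 : ℕ) : ℝ) / ((n - 1 : ℕ) : ℝ))
        ≤ 4 * Real.exp 1 * (t1 + t2) / t1 := by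
      have hcast2 : ((n - 1 : ℕ) : ℝ) = (n : ℝ) - 1 := by
        push_cast [Nat.cast_sub (by omega : 1 ≤ n)]
        ring
      rw [hcast, hcast2]
      have hnR : (2:ℝ) ≤ (n : ℝ) := by exact_mod_cast hn2
      have hn1pos : (0:ℝ) < (n:ℝ) - 1 := by linarith
      have hA : (m : ℝ) + (n:ℝ) - 1 ≤ (n:ℝ) * (t1 + t2) / t1 := by
        have : t2 * n / t1 + 1 + (n:ℝ) - 1 = (n:ℝ) * (t1 + t2) / t1 := by
          field_simp
          ring
        linarith [hmb]
      have hgoal : 2 * (Real.exp 1 * ((m:ℝ) + (n:ℝ) - 1) / ((n:ℝ) - 1))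
          = (2 * Real.exp 1 * ((m:ℝ) + (n:ℝ) - 1)) / ((n:ℝ) - 1) := by ring
      rw [hgoal, div_le_div_iff₀ hn1pos ht1]
      have hstep : ((m:ℝ) + (n:ℝ) - 1) * t1 ≤ (n:ℝ) * (t1 + t2) := by
        have h9 := mul_le_mul_of_nonneg_right hA (le_of_lt ht1)
        calc ((m:ℝ) + (n:ℝ) - 1) * t1 ≤ ((n:ℝ) * (t1 + t2) / t1) * t1 := h9
          _ = (n:ℝ) * (t1 + t2) := by field_simp
      have hnt : (n:ℝ) * (t1 + t2) ≤ 2 * ((n:ℝ) - 1) * (t1 + t2) := by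
        have h10 : (n:ℝ) ≤ 2 * ((n:ℝ) - 1) := by linarith
        have ht12 : (0:ℝ) ≤ t1 + t2 := by linarith
        nlinarith
      have h11 := mul_le_mul_of_nonneg_left (hstep.trans hnt)
        (by positivity : (0:ℝ) ≤ 2 * Real.exp 1)
      nlinarith [h11]
    calc (2:ℝ) ^ (n-1) * ((m + n - 1).choose (n-1) : ℝ)
        ≤ (2:ℝ) ^ (n-1) * (Real.exp 1 * ((m + n - 1:ℕ):ℝ) / ((n - 1:ℕ):ℝ)) ^ (n-1) :=
          mul_le_mul_of_nonneg_left hcb (by positivity)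
      _ = (2 * (Real.exp 1 * ((m + n - 1:ℕ):ℝ) / ((n - 1:ℕ):ℝ))) ^ (n-1) := by
          rw [mul_pow]
      _ ≤ (4 * Real.exp 1 * (t1 + t2) / t1) ^ (n-1) := by
          refine pow_le_pow_left₀ ?_ hbase _
          have hcast' : ((m + n - 1 : ℕ) : ℝ) ≥ 0 := by positivity
          have : ((n - 1 : ℕ) : ℝ) > 0 := by
            have : (0:ℕ) < n - 1 := by omega
            exact_mod_cast this
          positivity

end NT

/-- Nazarov–Turán, real exponents, intervals: Let
`p(t) = ∑_{j=1}^n c_j e^{-λ_j t}` with real coefficients and strictly decreasing real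
exponents `λ_1 > ⋯ > λ_n`, and suppose `|λ_1| ≤ L`. Then for all `t_1, t_2 > 0` and every
`t ∈ [-t_2, t_1]`,
`|p(t)| ≤ e^{(t_1+t_2)L} (4e(t_1+t_2)/t_1)^{n-1} · sup_{s ∈ [0,t_1]} |p(s)|`. -/
theorem nazarov_turan {n : ℕ} (hn : 0 < n)
    (c lam : Fin n → ℝ) (hanti : StrictAnti lam) (L : ℝ) (hL : |lam ⟨0, hn⟩| ≤ L)
    (t1 t2 : ℝ) (ht1 : 0 < t1) (ht2 : 0 < t2)
    (p : ℝ → ℝ) (hp : ∀ t, p t = ∑ j, c j * Real.exp (-(lam j * t))) :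
    ∀ t ∈ Set.Icc (-t2) t1,
      |p t| ≤ Real.exp ((t1 + t2) * L) * (4 * Real.exp 1 * (t1 + t2) / t1) ^ (n - 1) *
        sSup ((fun s => |p s|) '' Set.Icc 0 t1) := by
  intro τ hτ
  obtain ⟨hτ1, hτ2⟩ := hτ
  set lam0 := lam ⟨0, hn⟩ with hlam0
  have hL0 : 0 ≤ L := le_trans (abs_nonneg _) hL
  have hcont : Continuous p := by
    have hpe : p = fun t => ∑ j, c j * Real.exp (-(lam j * t)) := funext hp
    rw [hpe]
    refine continuous_finset_sum _ fun j _ => ?_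
    exact continuous_const.mul (((continuous_const.mul continuous_id).neg).rexp)
  set M := sSup ((fun s => |p s|) '' Set.Icc 0 t1) with hM_def
  have hbdd : BddAbove ((fun s => |p s|) '' Set.Icc 0 t1) :=
    (isCompact_Icc.image_of_continuousOn (hcont.abs.continuousOn)).bddAbove
  have hmem : ∀ s, s ∈ Set.Icc 0 t1 → |p s| ≤ M := fun s hs => le_csSup hbdd ⟨s, hs, rfl⟩
  have hMnn : 0 ≤ M := le_trans (abs_nonneg _) (hmem 0 ⟨le_refl 0, ht1.le⟩)
  have hE1 : (1:ℝ) ≤ Real.exp 1 := by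
    have := Real.add_one_le_exp (1:ℝ)
    linarith
  have hpre1 : (1:ℝ) ≤ Real.exp ((t1 + t2) * L) := Real.one_le_exp (by positivity)
  have hbase1 : (1:ℝ) ≤ 4 * Real.exp 1 * (t1 + t2) / t1 := by
    rw [le_div_iff₀ ht1]
    nlinarith [hE1, ht1, ht2]
  have hpow1 : (1:ℝ) ≤ (4 * Real.exp 1 * (t1 + t2) / t1) ^ (n - 1) := one_le_pow₀ hbase1
  by_cases hτneg : 0 ≤ τ
  · -- trivial case: τ ∈ [0, t1]
    have h1 : |p τ| ≤ M := hmem τ ⟨hτneg, hτ2⟩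
    calc |p τ| ≤ M := h1
      _ = 1 * 1 * M := by ring
      _ ≤ Real.exp ((t1+t2)*L) * (4*Real.exp 1*(t1+t2)/t1)^(n-1) * M := by
          refine mul_le_mul (mul_le_mul hpre1 hpow1 (by norm_num) (by positivity)) le_rfl hMnn
            (by positivity)
  · push_neg at hτneg
    set h := t1 / n with hh_def
    have hnR : (0:ℝ) < n := by exact_mod_cast hn
    have hh : 0 < h := div_pos ht1 hnR
    set m := ⌈(-τ) / h⌉₊ with hm_def
    have hτpos : 0 < -τ := by linarith
    have hm1 : 1 ≤ m := Nat.one_le_ceil_iff.mpr (by positivity)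
    have hmlow : (-τ) / h ≤ (m:ℝ) := Nat.le_ceil _
    have hmup : (m:ℝ) < (-τ)/h + 1 := Nat.ceil_lt_add_one (by positivity)
    have hmlow' : -τ ≤ m * h := by
      rw [div_le_iff₀ hh] at hmlow
      exact hmlow
    have hmup' : (m:ℝ) * h < -τ + h := by
      have := mul_lt_mul_of_pos_right hmup hh
      rwa [add_mul, div_mul_cancel₀ _ (ne_of_gt hh), one_mul] at this
    have hlam_le : ∀ j : Fin n, lam j ≤ lam0 := by
      intro j
      rcases Nat.eq_zero_or_pos (j : ℕ) with hj0 | hjp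
      · have : j = ⟨0, hn⟩ := by
          apply Fin.ext
          simp [hj0]
        rw [this]
      · exact le_of_lt (hanti (Fin.lt_def.mpr (by simpa using hjp)))
    -- the node and coefficient functions
    set xf : ℕ → ℝ := fun j => if hj : j < n then Real.exp (-((lam0 - lam ⟨j, hj⟩) * h)) else 1
      with hxf
    set bf : ℕ → ℝ := fun j => if hj : j < n then
        c ⟨j, hj⟩ * Real.exp ((lam0 - lam ⟨j, hj⟩) * τ) else 0 with hbf
    have hx0 : ∀ j, j < n → 0 < xf j := by
      intro j hj
      simp only [hxf, dif_pos hj]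
      exact Real.exp_pos _
    have hx1 : ∀ j, j < n → xf j ≤ 1 := by
      intro j hj
      simp only [hxf, dif_pos hj]
      rw [Real.exp_le_one_iff]
      have h1 : lam ⟨j, hj⟩ ≤ lam0 := hlam_le _
      nlinarith [hh]
    have hxa : ∀ s t, s < t → t < n → xf t < xf s := by
      intro s t hst htn
      simp only [hxf, dif_pos htn, dif_pos (by omega : s < n)]
      rw [Real.exp_lt_exp]
      have h1 : lam ⟨t, htn⟩ < lam ⟨s, by omega⟩ := hanti (Fin.mk_lt_mk.mpr hst)
      nlinarith [hh]
    -- the grid identity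
    have hu : ∀ ν : ℕ, ∑ j ∈ Finset.range n, bf j * ((xf j)⁻¹) ^ ν
        = p (τ + ν * h) * Real.exp (lam0 * (τ + ν * h)) := by
      intro ν
      rw [hp (τ + ν * h), Finset.sum_mul,
        ← Fin.sum_univ_eq_sum_range (fun j => bf j * ((xf j)⁻¹) ^ ν) n]
      refine Finset.sum_congr rfl fun j _ => ?_
      have hj : (j:ℕ) < n := j.isLt
      have e1 : ((xf (j:ℕ))⁻¹ : ℝ) ^ ν = Real.exp ((lam0 - lam j) * h * ν) := by
        simp only [hxf, dif_pos hj, Fin.eta]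
        rw [Real.exp_neg, inv_inv, ← Real.exp_nat_mul]
        congr 1
        ring
      have e2 : bf (j:ℕ) = c j * Real.exp ((lam0 - lam j) * τ) := by
        simp only [hbf, dif_pos hj, Fin.eta]
      rw [e1, e2]
      simp only [mul_assoc, ← Real.exp_add]
      congr 1
      ring
    -- grid points lie in [0, t1]
    have hgrid : ∀ l, l < n → (0 ≤ τ + (↑(m + l)) * h ∧ τ + (↑(m + l)) * h ≤ t1) := by
      intro l hl
      have hcast : ((m + l : ℕ) : ℝ) = (m:ℝ) + (l:ℝ) := by push_cast; ring
      have hexp : τ + ((m:ℝ) + (l:ℝ)) * h = τ + (m:ℝ) * h + (l:ℝ) * h := by ring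
      constructor
      · rw [hcast, hexp]
        have hlh : 0 ≤ (l:ℝ) * h := by positivity
        linarith [hmlow']
      · rw [hcast, hexp]
        have hl1 : (l:ℝ) + 1 ≤ (n:ℝ) := by exact_mod_cast hl
        have hnh : (n:ℝ) * h = t1 := by
          rw [hh_def]
          field_simp
        have hstep1 : ((l:ℝ) + 1) * h ≤ (n:ℝ) * h := mul_le_mul_of_nonneg_right hl1 hh.le
        have hstep2 : ((l:ℝ) + 1) * h = (l:ℝ) * h + h := by ring
        linarith [hmup']
    -- apply core
    have hM' : ∀ l, l < n → |∑ j ∈ Finset.range n, bf j * ((xf j)⁻¹) ^ (m + l)|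
        ≤ M * Real.exp (L * t1) := by
      intro l hl
      rw [hu (m + l)]
      obtain ⟨hs0, hs1⟩ := hgrid l hl
      rw [abs_mul, abs_of_pos (Real.exp_pos _)]
      refine mul_le_mul (hmem _ ⟨hs0, hs1⟩) ?_ (Real.exp_pos _).le hMnn
      rw [Real.exp_le_exp]
      have h1 : lam0 ≤ |lam0| := le_abs_self _
      have h2 : lam0 * (τ + (↑(m + l)) * h) ≤ L * (τ + (↑(m + l)) * h) := by
        apply mul_le_mul_of_nonneg_right (h1.trans hL) hs0
      refine h2.trans ?_
      exact mul_le_mul_of_nonneg_left hs1 hL0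
    have hcore := NT.core (by omega : 1 ≤ n) hm1 xf bf hx0 hx1 hxa
      (M * Real.exp (L * t1)) hM'
    -- recover |p τ|
    have hu0 : ∑ j ∈ Finset.range n, bf j = p τ * Real.exp (lam0 * τ) := by
      have := hu 0
      simp only [Nat.cast_zero, zero_mul, add_zero, pow_zero, mul_one] at this
      exact this
    have hpτ : |p τ| = |∑ j ∈ Finset.range n, bf j| * Real.exp (-(lam0 * τ)) := by
      rw [hu0, abs_mul, abs_of_pos (Real.exp_pos _), mul_assoc, ← Real.exp_add]
      simp
    -- final numeric bound
    have hexp2 : Real.exp (-(lam0 * τ)) ≤ Real.exp (L * t2) := by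
      rw [Real.exp_le_exp]
      have h1 : -(lam0 * τ) = (-τ) * lam0 := by ring
      rw [h1]
      calc (-τ) * lam0 ≤ (-τ) * |lam0| :=
            mul_le_mul_of_nonneg_left (le_abs_self _) hτpos.le
        _ ≤ t2 * L := by
            apply mul_le_mul (by linarith) hL (abs_nonneg _) ht2.le
        _ = L * t2 := by ring
    have hmb : (m:ℝ) ≤ t2 * n / t1 + 1 := by
      have h1 : (-τ)/h ≤ t2 / h := by gcongr ?_ / h <;> linarith
      have h2 : t2 / h = t2 * n / t1 := by
        rw [hh_def, div_div_eq_mul_div]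
      linarith [hmup, h1, h2.le]
    have hkey := NT.keypow (by omega : 1 ≤ n) hm1 t1 t2 ht1 ht2 hmb
    calc |p τ| = |∑ j ∈ Finset.range n, bf j| * Real.exp (-(lam0 * τ)) := hpτ
      _ ≤ (2 ^ (n - 1) * ((m + n - 1).choose (n - 1)) * (M * Real.exp (L * t1)))
            * Real.exp (L * t2) := by
          refine mul_le_mul hcore hexp2 (Real.exp_pos _).le ?_
          positivity
      _ = (2 ^ (n - 1) * ((m + n - 1).choose (n - 1) : ℝ)) * M
            * (Real.exp (L * t1) * Real.exp (L * t2)) := by ring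
      _ ≤ ((4 * Real.exp 1 * (t1 + t2) / t1) ^ (n - 1)) * M
            * (Real.exp (L * t1) * Real.exp (L * t2)) := by
          refine mul_le_mul_of_nonneg_right (mul_le_mul_of_nonneg_right hkey hMnn)
            (by positivity)
      _ = Real.exp ((t1 + t2) * L) * (4 * Real.exp 1 * (t1 + t2) / t1) ^ (n - 1) * M := by
          rw [← Real.exp_add]
          ring_nf
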